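/- Let π be a permutation of Fin n which is an n-cycle (i.e., the map k ↦ π^k 0, for k = 0, …, n−1, is a bijection of Fin n), let τ₀ = id be the identity permutation, and suppose a i (π i) * a i i ≠ 0 for all i : Fin n and (a (π^k 0) (π^k 0))^2 = a (π^k 0) (π^(k+1) 0) * a (π^(k+1) 0) (π^(k+1) 0) for all k (indices of the powers of π taken modulo n). Then E^n_{π,τ₀}(a) is isomorphic, as a non-unital non-associative ℝ-algebra, to the evolution algebra A^n = E^n_{π*,τ₀}(𝟙), where π* is the cyclic shift i ↦ i + 1 of Fin n and 𝟙 is the matrix all of whose entries equal 1; A^n has multiplication table η_i * η_i = η_{i+1} + η_i (indices modulo n) and η_i * η_j = 0 for i ≠ j. -/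

import Mathlib

/-- The product of the evolution algebra `E_{π,τ}(a)` on a finite type `ι`. -/
noncomputable def evolMul {ι : Type*} [Fintype ι] [DecidableEq ι]
    (π τ : Equiv.Perm ι) (a : ι → ι → ℝ) (x y : ι → ℝ) : ι → ℝ :=
  fun j => ∑ i, x i * y i *
    ((if π i = j then a i (π i) else 0) + (if τ i = j then a i (τ i) else 0))

lemma sum_if_perm {n : ℕ} (g : Equiv.Perm (Fin n)) (f : Fin n → ℝ) (j : Fin n) :
    ∑ i, (if g i = j then f i else 0) = f (g.symm j) := by
  simp only [Equiv.apply_eq_iff_eq_symm_apply, Finset.sum_ite_eq', Finset.mem_univ, if_true]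

/-- for an `n`-cycle `π`, identity `τ₀`, structural constants with
`a i (π i) * a i i ≠ 0` and `(a (π^k 0) (π^k 0))^2 = a (π^k 0) (π^(k+1) 0) * a (π^(k+1) 0) (π^(k+1) 0)`
for all `k`, the evolution algebra `E^n_{π,τ₀}(a)` is isomorphic to the evolution
algebra `A^n = E^n_{π*,τ₀}(𝟙)` with all structural constants equal to `1`, where `π*`
is the cyclic shift `i ↦ i + 1`. -/
theorem stmt_17 (n : ℕ) [NeZero n] (π : Equiv.Perm (Fin n))
    (hπ : Function.Bijective (fun k : Fin n => (π ^ (k : ℕ)) 0))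
    (a : Fin n → Fin n → ℝ)
    (ha : ∀ i : Fin n, a i (π i) * a i i ≠ 0)
    (ha2 : ∀ k : Fin n,
      (a ((π ^ (k : ℕ)) 0) ((π ^ (k : ℕ)) 0)) ^ 2 =
        a ((π ^ (k : ℕ)) 0) ((π ^ ((k : ℕ) + 1)) 0) *
          a ((π ^ ((k : ℕ) + 1)) 0) ((π ^ ((k : ℕ) + 1)) 0))
    (πs : Equiv.Perm (Fin n)) (hπs : ∀ i : Fin n, πs i = i + 1) :
    ∃ e : (Fin n → ℝ) ≃ₗ[ℝ] (Fin n → ℝ),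
      ∀ x y : Fin n → ℝ,
        e (evolMul π 1 a x y) = evolMul πs 1 (fun _ _ => (1 : ℝ)) (e x) (e y) := by
  classical
  set σ : Fin n → Fin n := fun k => (π ^ (k : ℕ)) 0 with hσdef
  -- π ^ n fixes 0
  have hπn0 : (π ^ n) 0 = 0 := by
    obtain ⟨j, hj⟩ := hπ.2 ((π ^ n) 0)
    simp only [hσdef] at hj
    have hsplit : (π ^ ((j : ℕ) + (n - (j : ℕ)))) 0 = (π ^ (j : ℕ)) 0 := by
      rw [Nat.add_sub_cancel' (le_of_lt j.isLt)]
      exact hj.symm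
    rw [pow_add, Equiv.Perm.mul_apply] at hsplit
    have h0 : (π ^ (n - (j : ℕ))) 0 = 0 := (π ^ (j : ℕ)).injective hsplit
    by_cases hj0 : (j : ℕ) = 0
    · rw [← hj, hj0, pow_zero]; rfl
    · exfalso
      have hm : n - (j : ℕ) < n := Nat.sub_lt (Nat.pos_of_ne_zero (NeZero.ne n))
        (Nat.pos_of_ne_zero hj0)
      have heq : (⟨n - (j : ℕ), hm⟩ : Fin n) = 0 := by
        apply hπ.1
        simp only [hσdef]
        rw [h0]
        rfl
      have : n - (j : ℕ) = (0 : Fin n).val := congrArg Fin.val heq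
      simp only [Fin.val_zero] at this
      omega
  -- π ^ n = 1
  have hπn : π ^ n = 1 := by
    refine Equiv.ext fun x => ?_
    obtain ⟨k, hk⟩ := hπ.2 x
    simp only [hσdef] at hk
    rw [← hk]
    calc (π ^ n) ((π ^ (k : ℕ)) 0) = (π ^ (n + (k : ℕ))) 0 := by
          rw [pow_add, Equiv.Perm.mul_apply]
      _ = (π ^ (k : ℕ)) ((π ^ n) 0) := by rw [Nat.add_comm, pow_add, Equiv.Perm.mul_apply]
      _ = (π ^ (k : ℕ)) 0 := by rw [hπn0]
      _ = (1 : Equiv.Perm (Fin n)) ((π ^ (k : ℕ)) 0) := rfl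
  have hpowmod : ∀ m : ℕ, π ^ (m % n) = π ^ m := by
    intro m
    conv_rhs => rw [← Nat.mod_add_div m n]
    rw [pow_add, pow_mul, hπn, one_pow, mul_one]
  -- stepping lemma
  have hstep : ∀ m : Fin n, (π ^ ((m : ℕ) + 1)) 0 = σ (m + 1) := by
    intro m
    show _ = (π ^ ((m + 1 : Fin n) : ℕ)) 0
    have hv : ((m + 1 : Fin n) : ℕ) = ((m : ℕ) + 1) % n := by
      rw [Fin.val_add, Fin.val_one', Nat.add_mod m.val 1 n, Nat.mod_eq_of_lt m.isLt]
    rw [hv, hpowmod]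
  have hπσ : ∀ m : Fin n, π (σ m) = σ (m + 1) := by
    intro m
    rw [← hstep m]
    show π ((π ^ (m : ℕ)) 0) = _
    rw [pow_succ', Equiv.Perm.mul_apply]
  have hπσ' : ∀ k : Fin n, π.symm (σ k) = σ (k - 1) := by
    intro k
    rw [Equiv.symm_apply_eq, hπσ (k - 1), sub_add_cancel]
  set c : Fin n → ℝ := fun k => a (σ k) (σ k) with hcdef
  have hc : ∀ k, c k ≠ 0 := by
    intro k h
    exact ha (σ k) (mul_eq_zero_of_right _ h)
  have key : ∀ k : Fin n, c (k - 1) ^ 2 = a (σ (k - 1)) (σ k) * c k := by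
    intro k
    have h := ha2 (k - 1)
    have h2 : (π ^ (((k - 1 : Fin n) : ℕ) + 1)) 0 = σ k := by
      rw [hstep (k - 1), sub_add_cancel]
    rw [h2] at h
    exact h
  -- the linear equivalence
  set σe : Equiv.Perm (Fin n) := Equiv.ofBijective σ hπ with hσedef
  set E : (Fin n → ℝ) ≃ₗ[ℝ] (Fin n → ℝ) :=
    { toFun := fun x k => c k * x (σ k)
      invFun := fun y i => (c (σe.symm i))⁻¹ * y (σe.symm i)
      map_add' := by
        intro x y
        funext k
        show c k * (x (σ k) + y (σ k)) = c k * x (σ k) + c k * y (σ k)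
        ring
      map_smul' := by
        intro r x
        funext k
        show c k * (r * x (σ k)) = r * (c k * x (σ k))
        ring
      left_inv := by
        intro x
        funext i
        show (c (σe.symm i))⁻¹ * (c (σe.symm i) * x (σ (σe.symm i))) = x i
        rw [inv_mul_cancel_left₀ (hc _)]
        show x (σe (σe.symm i)) = x i
        rw [σe.apply_symm_apply]
      right_inv := by
        intro y
        funext k
        show c k * ((c (σe.symm (σe k)))⁻¹ * y (σe.symm (σe k))) = y k
        rw [σe.symm_apply_apply, mul_inv_cancel_left₀ (hc k)] } with hEdef
  refine ⟨E, fun x y => ?_⟩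
  funext k
  have hEapp : ∀ (z : Fin n → ℝ) (m : Fin n), E z m = c m * z (σ m) := fun z m => rfl
  have hπs' : πs.symm k = k - 1 := by
    rw [Equiv.symm_apply_eq, hπs, sub_add_cancel]
  have hL : E (evolMul π 1 a x y) k = c k * (evolMul π 1 a x y (σ k)) := rfl
  have hval : evolMul π 1 a x y (σ k) =
      x (σ (k - 1)) * y (σ (k - 1)) * a (σ (k - 1)) (σ k)
        + x (σ k) * y (σ k) * a (σ k) (σ k) := by
    simp only [evolMul, Equiv.Perm.coe_one, id_eq, mul_add, mul_ite, mul_zero,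
      Finset.sum_add_distrib, Finset.sum_ite_eq', Finset.mem_univ, if_true]
    rw [sum_if_perm π (fun i => x i * y i * a i (π i)) (σ k)]
    simp only [Equiv.apply_symm_apply]
    rw [hπσ' k]
    rw [Finset.sum_eq_single (σ k) (fun b _ hb => by simp [hb]) (fun h => absurd (Finset.mem_univ _) h)]
    show _ + _ * (if σ k = σ k then _ else _) = _
    rw [if_pos rfl]
  have hR : evolMul πs 1 (fun _ _ => (1 : ℝ)) (E x) (E y) k =
      E x (k - 1) * E y (k - 1) * 1 + E x k * E y k * 1 := by
    simp only [evolMul, Equiv.Perm.coe_one, id_eq, mul_add, mul_ite, mul_zero,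
      Finset.sum_add_distrib, Finset.sum_ite_eq', Finset.mem_univ, if_true]
    rw [sum_if_perm πs (fun i => E x i * E y i * 1) k, hπs']
    rw [Finset.sum_eq_single k (fun b _ hb => by simp [hb]) (fun h => absurd (Finset.mem_univ _) h)]
    show _ + _ * (if k = k then _ else _) = _
    rw [if_pos rfl]
  rw [hL, hval, hR, hEapp x (k - 1), hEapp y (k - 1), hEapp x k, hEapp y k]
  have hkey := key k
  have hck : c k = a (σ k) (σ k) := rfl
  rw [← hck]
  linear_combination (-(x (σ (k - 1)) * y (σ (k - 1)))) * hkey
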